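/- Let Γ be a finite group of order m and let V be a nonzero finite-dimensional complex representation of Γ. Then the space of Γ-invariant vectors in the m-th symmetric power Sym^m V is nonzero. -/

import Mathlib

open scoped TensorProduct

open PiTensorProduct in
/-- If `Γ` is a finite group of order `m` and `V ≠ 0` a finite-dimensional
complex representation of `Γ`, then the space of `Γ`-invariant vectors in `Sym^m V` is
nonzero.  Since we are in characteristic zero, `Sym^m V` is realized as the space of
symmetric tensors inside the `m`-th tensor power of `V`; we assert the existence of a
nonzero symmetric `Γ`-invariant tensor. -/
theorem statement0 (Γ : Type*) [Group Γ] [Finite Γ]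
    (V : Type*) [AddCommGroup V] [Module ℂ V] [FiniteDimensional ℂ V] [Nontrivial V]
    (ρ : Representation ℂ Γ V) :
    ∃ t : ⨂[ℂ] (_ : Fin (Nat.card Γ)), V, t ≠ 0 ∧
      (∀ σ : Equiv.Perm (Fin (Nat.card Γ)),
        PiTensorProduct.reindex ℂ (fun _ : Fin (Nat.card Γ) => V) σ t = t) ∧
      (∀ g : Γ,
        PiTensorProduct.map (fun _ : Fin (Nat.card Γ) => (ρ g : V →ₗ[ℂ] V)) t = t) := by
  classical
  set m := Nat.card Γ with hm
  obtain ⟨v, hv⟩ := exists_ne (0 : V)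
  set w : Γ → V := fun γ => ρ γ v with hw
  have hwne : ∀ γ, w γ ≠ 0 := by
    intro γ h
    apply hv
    have : ρ γ⁻¹ (w γ) = v := by
      simp only [hw, ← Module.End.mul_apply, ← _root_.map_mul]
      simp
    rw [h, map_zero] at this
    exact this.symm
  -- a functional not vanishing on any w γ
  have : Finite Γ := inferInstance
  obtain ⟨φ, hφ⟩ : ∃ φ : Module.Dual ℂ V, ∀ γ, φ (w γ) ≠ 0 := by
    by_contra hcon
    push_neg at hcon
    have hcover : ⋃ γ : Γ, ((LinearMap.ker (Module.Dual.eval ℂ V (w γ)) :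
        Submodule ℂ (Module.Dual ℂ V)) : Set (Module.Dual ℂ V)) = Set.univ := by
      apply Set.eq_univ_of_forall
      intro φ
      obtain ⟨γ, hγ⟩ := hcon φ
      exact Set.mem_iUnion.mpr ⟨γ, by simpa [LinearMap.mem_ker] using hγ⟩
    obtain ⟨γ, hγ⟩ := Subspace.exists_eq_top_of_iUnion_eq_univ hcover
    apply hwne γ
    rw [← Module.forall_dual_apply_eq_zero_iff (R := ℂ)]
    intro ψ
    have : ψ ∈ LinearMap.ker (Module.Dual.eval ℂ V (w γ)) := hγ ▸ Submodule.mem_top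
    simpa using this
  set e : Γ ≃ Fin m := Finite.equivFin Γ with he
  set t : ⨂[ℂ] (_ : Fin m), V :=
    ∑ σ : Equiv.Perm (Fin m), tprod ℂ (fun i => w (e.symm (σ i))) with ht
  refine ⟨t, ?_, ?_, ?_⟩
  · -- nonzero: evaluate with φ^{⊗ m}
    set F : (⨂[ℂ] (_ : Fin m), V) →ₗ[ℂ] ℂ :=
      PiTensorProduct.lift ((MultilinearMap.mkPiAlgebra ℂ (Fin m) ℂ).compLinearMap
        (fun _ => φ)) with hF
    have hFt : F t = (Fintype.card (Equiv.Perm (Fin m))) • ∏ i, φ (w (e.symm i)) := by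
      rw [ht, map_sum]
      rw [Finset.sum_congr rfl (fun σ _ => ?_), Finset.sum_const, Finset.card_univ]
      rw [hF, PiTensorProduct.lift.tprod]
      simp only [MultilinearMap.compLinearMap_apply, MultilinearMap.mkPiAlgebra_apply]
      exact Equiv.prod_comp σ (fun i => φ (w (e.symm i)))
    intro h0
    rw [h0, map_zero] at hFt
    have hprod : ∏ i, φ (w (e.symm i)) ≠ 0 :=
      Finset.prod_ne_zero_iff.mpr (fun i _ => hφ _)
    have hcard : (Fintype.card (Equiv.Perm (Fin m)) : ℂ) ≠ 0 := by
      exact_mod_cast Nat.cast_ne_zero.mpr Fintype.card_ne_zero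
    rw [nsmul_eq_mul] at hFt
    exact mul_ne_zero hcard hprod hFt.symm
  · -- symmetry
    intro π
    rw [ht, map_sum]
    rw [show ∑ σ : Equiv.Perm (Fin m), (PiTensorProduct.reindex ℂ (fun _ : Fin m => V) π)
        (tprod ℂ fun i => w (e.symm (σ i)))
      = ∑ σ : Equiv.Perm (Fin m), tprod ℂ (fun i => w (e.symm ((σ * π⁻¹) i))) from
      Finset.sum_congr rfl fun σ _ => by
        rw [PiTensorProduct.reindex_tprod]
        rfl]
    exact Fintype.sum_bijective (· * π⁻¹) (Group.mulRight_bijective π⁻¹) _ _ (fun σ => rfl)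
  · -- Γ-invariance
    intro g
    rw [ht, map_sum]
    set τ : Equiv.Perm (Fin m) := (e.symm.trans (Equiv.mulLeft g)).trans e with hτ
    have key : ∀ σ : Equiv.Perm (Fin m),
        (PiTensorProduct.map fun _ : Fin m => (ρ g : V →ₗ[ℂ] V))
          (tprod ℂ fun i => w (e.symm (σ i)))
        = tprod ℂ (fun i => w (e.symm ((τ * σ) i))) := by
      intro σ
      rw [PiTensorProduct.map_tprod]
      congr 1
      funext i
      have : (τ * σ) i = e (g * e.symm (σ i)) := rfl
      rw [this, Equiv.symm_apply_apply]
      simp only [hw, ← Module.End.mul_apply, ← _root_.map_mul]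
    simp only [key]
    exact Fintype.sum_bijective (τ * ·) (Group.mulLeft_bijective τ) _ _ (fun σ => rfl)
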